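/- Let U, V in SpSt(2n,2k) with the relevant inverses well-defined: set A = 2((I + V^+U)^{-1} - (I + U^+V)^{-1}) and H = 2((V + U)(I + U^+V)^{-1} - U). Then (1/4)H^+H = (U^+V + I)^{-1} + (V^+U + I)^{-1} - I, and consequently (1/4)H^+H - (1/2)A + I = 2(U^+V + I)^{-1}. -/
import Mathlib


open Matrix

noncomputable section

/-- The standard symplectic matrix `J = [[0, I],[-I, 0]]` of size `2m`. -/
def Jmat (m : ℕ) : Matrix (Fin m ⊕ Fin m) (Fin m ⊕ Fin m) ℝ :=
  Matrix.fromBlocks 0 1 (-1) 0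

/-- The symplectic inverse `A⁺ = J₂ₖᵀ Aᵀ J₂ₙ` of a `2n × 2k` real matrix. -/
def sympInv {n k : ℕ} (A : Matrix (Fin n ⊕ Fin n) (Fin k ⊕ Fin k) ℝ) :
    Matrix (Fin k ⊕ Fin k) (Fin n ⊕ Fin n) ℝ :=
  (Jmat k)ᵀ * Aᵀ * Jmat n

lemma Jmat_transpose (m : ℕ) : (Jmat m)ᵀ = - Jmat m := by
  simp [Jmat, Matrix.fromBlocks_transpose, Matrix.fromBlocks_neg]

lemma Jmat_mul_self (m : ℕ) : Jmat m * Jmat m = -1 := by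
  simp [Jmat, Matrix.fromBlocks_multiply]
  rw [← Matrix.fromBlocks_one, Matrix.fromBlocks_neg]
  simp

lemma Jmat_mul_transpose (m : ℕ) : Jmat m * (Jmat m)ᵀ = 1 := by
  rw [Jmat_transpose, Matrix.mul_neg, Jmat_mul_self, neg_neg]

lemma Jmat_transpose_mul (m : ℕ) : (Jmat m)ᵀ * Jmat m = 1 := by
  rw [Jmat_transpose, Matrix.neg_mul, Jmat_mul_self, neg_neg]

lemma sympInv_mul {n k l : ℕ} (A : Matrix (Fin n ⊕ Fin n) (Fin k ⊕ Fin k) ℝ)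
    (B : Matrix (Fin k ⊕ Fin k) (Fin l ⊕ Fin l) ℝ) :
    sympInv (A * B) = sympInv B * sympInv A := by
  unfold sympInv
  rw [Matrix.transpose_mul]
  calc (Jmat l)ᵀ * (Bᵀ * Aᵀ) * Jmat n
      = (Jmat l)ᵀ * Bᵀ * ((Jmat k * (Jmat k)ᵀ) * (Aᵀ * Jmat n)) := by
        rw [Jmat_mul_transpose]; simp [Matrix.mul_assoc]
    _ = ((Jmat l)ᵀ * Bᵀ * Jmat k) * ((Jmat k)ᵀ * Aᵀ * Jmat n) := by
        simp [Matrix.mul_assoc]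

lemma sympInv_one {k : ℕ} : sympInv (1 : Matrix (Fin k ⊕ Fin k) (Fin k ⊕ Fin k) ℝ) = 1 := by
  simp [sympInv, Jmat_transpose_mul]

lemma sympInv_add {n k : ℕ} (A B : Matrix (Fin n ⊕ Fin n) (Fin k ⊕ Fin k) ℝ) :
    sympInv (A + B) = sympInv A + sympInv B := by
  simp [sympInv, Matrix.transpose_add, Matrix.add_mul, Matrix.mul_add]

lemma sympInv_sub {n k : ℕ} (A B : Matrix (Fin n ⊕ Fin n) (Fin k ⊕ Fin k) ℝ) :
    sympInv (A - B) = sympInv A - sympInv B := by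
  simp [sympInv, Matrix.transpose_sub, Matrix.sub_mul, Matrix.mul_sub]

lemma sympInv_nsmul {n k : ℕ} (c : ℕ) (A : Matrix (Fin n ⊕ Fin n) (Fin k ⊕ Fin k) ℝ) :
    sympInv (c • A) = c • sympInv A := by
  simp [sympInv, Matrix.transpose_smul, Matrix.smul_mul]

lemma sympInv_sympInv {n k : ℕ} (A : Matrix (Fin n ⊕ Fin n) (Fin k ⊕ Fin k) ℝ) :
    sympInv (sympInv A) = A := by
  unfold sympInv
  simp only [Matrix.transpose_mul, Matrix.transpose_transpose, Jmat_transpose]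
  simp only [Matrix.transpose_neg, Jmat_transpose, Matrix.neg_mul, Matrix.mul_neg, neg_neg]
  have : Jmat n * (Jmat n * (A * Jmat k)) * Jmat k
      = (Jmat n * Jmat n) * A * (Jmat k * Jmat k) := by
    simp only [Matrix.mul_assoc]
  rw [this, Jmat_mul_self, Jmat_mul_self]
  simp

lemma sympInv_inv {k : ℕ} (M : Matrix (Fin k ⊕ Fin k) (Fin k ⊕ Fin k) ℝ)
    (hM : IsUnit M) : sympInv M⁻¹ = (sympInv M)⁻¹ := by
  have hd : IsUnit M.det := (Matrix.isUnit_iff_isUnit_det M).mp hM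
  symm
  apply Matrix.inv_eq_right_inv
  rw [← sympInv_mul, Matrix.nonsing_inv_mul M hd, sympInv_one]

theorem stmt_13 (n k : ℕ) (U V : Matrix (Fin n ⊕ Fin n) (Fin k ⊕ Fin k) ℝ)
    (hU : sympInv U * U = 1) (hV : sympInv V * V = 1)
    (h1 : IsUnit (1 + sympInv U * V)) (h2 : IsUnit (1 + sympInv V * U))
    (A : Matrix (Fin k ⊕ Fin k) (Fin k ⊕ Fin k) ℝ)
    (hA : A = 2 • ((1 + sympInv V * U)⁻¹ - (1 + sympInv U * V)⁻¹))
    (H : Matrix (Fin n ⊕ Fin n) (Fin k ⊕ Fin k) ℝ)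
    (hH : H = 2 • ((V + U) * (1 + sympInv U * V)⁻¹ - U)) :
    (1/4 : ℝ) • (sympInv H * H)
        = (sympInv U * V + 1)⁻¹ + (sympInv V * U + 1)⁻¹ - 1 ∧
    (1/4 : ℝ) • (sympInv H * H) - (1/2 : ℝ) • A + 1 = 2 • (sympInv U * V + 1)⁻¹ := by
  have hdet1 : IsUnit (1 + sympInv U * V).det := (Matrix.isUnit_iff_isUnit_det _).mp h1
  have hdet2 : IsUnit (1 + sympInv V * U).det := (Matrix.isUnit_iff_isUnit_det _).mp h2
  set P := (1 + sympInv U * V)⁻¹ with hP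
  set Q := (1 + sympInv V * U)⁻¹ with hQ
  have hP1 : (1 + sympInv U * V) * P = 1 := Matrix.mul_nonsing_inv _ hdet1
  have hP2 : P * (1 + sympInv U * V) = 1 := Matrix.nonsing_inv_mul _ hdet1
  have hQ1 : (1 + sympInv V * U) * Q = 1 := Matrix.mul_nonsing_inv _ hdet2
  have hQ2 : Q * (1 + sympInv V * U) = 1 := Matrix.nonsing_inv_mul _ hdet2
  have hWW : sympInv (sympInv U * V) = sympInv V * U := by
    rw [sympInv_mul, sympInv_sympInv]
  have hsP : sympInv P = Q := by
    rw [hP, sympInv_inv _ h1, sympInv_add, sympInv_one, hWW, hQ]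
  have hsH : sympInv H = 2 • (Q * (sympInv V + sympInv U) - sympInv U) := by
    rw [hH, sympInv_nsmul, sympInv_sub, sympInv_mul, hsP, sympInv_add]
  have e1 : (sympInv V + sympInv U) * (V + U)
      = (1 + sympInv V * U) + (1 + sympInv U * V) := by
    rw [Matrix.add_mul, Matrix.mul_add, Matrix.mul_add, hU, hV]; abel
  have t1 : Q * (sympInv V + sympInv U) * ((V + U) * P) = P + Q := by
    rw [Matrix.mul_assoc Q, ← Matrix.mul_assoc (sympInv V + sympInv U), e1,
      Matrix.add_mul, Matrix.mul_add, hP1, ← Matrix.mul_assoc Q, hQ2,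
      Matrix.one_mul, Matrix.mul_one]
  have t2 : Q * (sympInv V + sympInv U) * U = 1 := by
    rw [Matrix.mul_assoc, Matrix.add_mul, hU]
    rw [show sympInv V * U + 1 = 1 + sympInv V * U from add_comm _ _, hQ2]
  have t3 : sympInv U * ((V + U) * P) = 1 := by
    rw [← Matrix.mul_assoc, Matrix.mul_add, hU, add_comm (sympInv U * V) 1, hP1]
  have key : (Q * (sympInv V + sympInv U) - sympInv U) * ((V + U) * P - U)
      = P + Q - 1 := by
    rw [Matrix.sub_mul, Matrix.mul_sub, Matrix.mul_sub, t1, t2, t3, hU]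
    abel
  have hM : sympInv H * H = (4 : ℕ) • (P + Q - 1) := by
    rw [hsH, hH, Matrix.smul_mul, Matrix.mul_smul, smul_smul, key]; norm_num
  have main : (1/4 : ℝ) • (sympInv H * H) = P + Q - 1 := by
    rw [hM, ← Nat.cast_smul_eq_nsmul ℝ, smul_smul]
    norm_num
  have hcomm1 : (sympInv U * V + 1)⁻¹ = P := by rw [hP, add_comm]
  have hcomm2 : (sympInv V * U + 1)⁻¹ = Q := by rw [hQ, add_comm]
  constructor
  · rw [main, hcomm1, hcomm2]
  · rw [main, hcomm1, hA]
    have : (1/2 : ℝ) • ((2:ℕ) • (Q - P)) = Q - P := by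
      rw [← Nat.cast_smul_eq_nsmul ℝ, smul_smul]; norm_num
    rw [this]
    abel
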